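/- Let d be the feed vertex (last vertex) of some median order of a tournament T, and let I be a module of T containing d. Then for every vertex v ∈ I, |N⁺(v) \ I| ≤ |N⁺⁺(v) \ I|. -/

import Mathlib

variable {V : Type*}

/-- An oriented graph: no loops or 2-cycles (asymmetric relation). -/
def Oriented (E : V → V → Prop) : Prop := ∀ u v : V, E u v → ¬ E v u

/-- A tournament: oriented and any two distinct vertices are joined by an arc. -/
def Tournament (E : V → V → Prop) : Prop :=
  Oriented E ∧ ∀ u v : V, u ≠ v → E u v ∨ E v u

def outN (E : V → V → Prop) (v : V) : Set V := {u | E v u}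

def inN (E : V → V → Prop) (v : V) : Set V := {u | E u v}

/-- The second out-neighborhood: vertices at directed distance exactly 2. -/
def secondN (E : V → V → Prop) (v : V) : Set V :=
  {u | ¬ E v u ∧ u ≠ v ∧ ∃ w, E v w ∧ E w u}

/-- `u` and `v` are distinct non-adjacent vertices (a missing edge). -/
def NonAdj (E : V → V → Prop) (u v : V) : Prop := u ≠ v ∧ ¬ E u v ∧ ¬ E v u

/-- The missing edges form a matching: every vertex has at most one non-neighbor. -/
def MissingMatching (E : V → V → Prop) : Prop :=
  ∀ u v w : V, NonAdj E u v → NonAdj E u w → v = w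

/-- A special arc `x ↠ y`: an arc such that `x` is not in the second
out-neighborhood of `y`. -/
def SpecialArc (E : V → V → Prop) (x y : V) : Prop :=
  E x y ∧ ¬ ∃ u, E y u ∧ E u x

/-- Number of forward arcs of an ordering (list) of the vertices. -/
noncomputable def fwd (E : V → V → Prop) (L : List V) : ℕ :=
  Set.ncard {p : ℕ × ℕ | p.1 < p.2 ∧ ∃ (h1 : p.1 < L.length) (h2 : p.2 < L.length),
    E (L.get ⟨p.1, h1⟩) (L.get ⟨p.2, h2⟩)}

/-- A median order: an enumeration of all vertices maximizing the number of
forward arcs. -/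
def MedianOrder (E : V → V → Prop) (L : List V) : Prop :=
  L.Nodup ∧ (∀ v : V, v ∈ L) ∧
    ∀ M : List V, M.Nodup → (∀ v : V, v ∈ M) → fwd E M ≤ fwd E L

/-- A module: any two vertices inside have the same in- and out-neighborhoods
outside. -/
def IsModule (E : V → V → Prop) (I : Set V) : Prop :=
  ∀ u ∈ I, ∀ v ∈ I, ∀ w, w ∉ I → (E u w ↔ E v w) ∧ (E w u ↔ E w v)

/-- 2-degeneracy of the underlying undirected graph. -/
def TwoDegenerate (E : V → V → Prop) : Prop :=
  ∀ S : Set V, S.Nonempty → ∃ v ∈ S, Set.ncard {u | u ∈ S ∧ u ≠ v ∧ (E u v ∨ E v u)} ≤ 2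

/-- The relation `(a,b) R (c,d)`: the 4-cycle `a → c ↠ b → d ↠ a`. -/
def Rrel (E : V → V → Prop) (a b c d : V) : Prop :=
  E a c ∧ SpecialArc E c b ∧ E b d ∧ SpecialArc E d a

open scoped Classical

noncomputable def cnt (p : V → Prop) (L : List V) : ℕ :=
  L.countP (fun u => decide (p u))

lemma cnt_nil (p : V → Prop) : cnt p ([] : List V) = 0 := rfl

lemma cnt_cons (p : V → Prop) (a : V) (l : List V) :
    cnt p (a :: l) = cnt p l + if p a then 1 else 0 := by
  simp [cnt, List.countP_cons]

lemma cnt_append (p : V → Prop) (l₁ l₂ : List V) :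
    cnt p (l₁ ++ l₂) = cnt p l₁ + cnt p l₂ := by
  simp [cnt, List.countP_append]

lemma cnt_mono {p q : V → Prop} {l : List V} (h : ∀ x ∈ l, p x → q x) :
    cnt p l ≤ cnt q l := by
  refine List.countP_mono_left (fun x hx => ?_)
  simpa using h x hx

lemma cnt_congr {p q : V → Prop} {l : List V} (h : ∀ x ∈ l, p x ↔ q x) :
    cnt p l = cnt q l := by
  refine List.countP_congr (fun x hx => ?_)
  simpa using h x hx

lemma cnt_perm (p : V → Prop) {l₁ l₂ : List V} (h : l₁.Perm l₂) :
    cnt p l₁ = cnt p l₂ := List.Perm.countP_eq _ h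

/-- positions of `l` whose entry satisfies `p` -/
def posP (p : V → Prop) (l : List V) : Set ℕ :=
  {j | ∃ (h : j < l.length), p (l.get ⟨j, h⟩)}

lemma posP_finite (p : V → Prop) (l : List V) : (posP p l).Finite :=
  Set.Finite.subset (Set.finite_Iio l.length) (fun j hj => hj.1)

lemma ncard_posP (p : V → Prop) (l : List V) : (posP p l).ncard = cnt p l := by
  induction l with
  | nil =>
    have : posP p ([] : List V) = ∅ := by
      ext j; simp [posP]
    simp [this, cnt_nil]
  | cons a l ih =>
    have hdec : posP p (a :: l) =
        (if p a then {0} else ∅) ∪ ((· + 1) '' posP p l) := by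
      ext j
      cases j with
      | zero =>
        simp only [posP, Set.mem_setOf_eq, Set.mem_union, Set.mem_image]
        constructor
        · rintro ⟨h, hp⟩
          left
          simp only [List.get] at hp
          simp [hp]
        · rintro (h | ⟨k, _, hk⟩)
          · by_cases hpa : p a
            · exact ⟨by simp, by simpa using hpa⟩
            · simp [hpa] at h
          · omega
      | succ k =>
        simp only [posP, Set.mem_setOf_eq, Set.mem_union, Set.mem_image]
        constructor
        · rintro ⟨h, hp⟩
          right
          refine ⟨k, ⟨by simpa using h, ?_⟩, rfl⟩
          rwa [List.get_cons_succ] at hp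
        · rintro (h | ⟨m, ⟨hm, hp⟩, hmk⟩)
          · by_cases hpa : p a
            · simp [hpa] at h
            · simp [hpa] at h
          · have : m = k := by omega
            subst this
            exact ⟨by simpa using hm, by rwa [List.get_cons_succ]⟩
    have hfin1 : (if p a then ({0} : Set ℕ) else ∅).Finite := by
      by_cases hpa : p a <;> simp [hpa]
    have hfin2 : ((· + 1) '' posP p l).Finite := Set.Finite.image _ (posP_finite p l)
    have hdisj : Disjoint (if p a then ({0} : Set ℕ) else ∅) ((· + 1) '' posP p l) := by
      rw [Set.disjoint_left]
      intro j hj ⟨k, _, hk⟩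
      by_cases hpa : p a <;> simp [hpa] at hj <;> simp at hk <;> omega
    rw [hdec, Set.ncard_union_eq hdisj hfin1 hfin2,
      Set.ncard_image_of_injective _ (fun x y => by omega), ih, cnt_cons]
    by_cases hpa : p a <;> simp [hpa, Nat.add_comm] <;> omega

def pairSet (E : V → V → Prop) (L : List V) : Set (ℕ × ℕ) :=
  {p : ℕ × ℕ | p.1 < p.2 ∧ ∃ (h1 : p.1 < L.length) (h2 : p.2 < L.length),
    E (L.get ⟨p.1, h1⟩) (L.get ⟨p.2, h2⟩)}

lemma fwd_eq_ncard_pairSet (E : V → V → Prop) (L : List V) :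
    fwd E L = (pairSet E L).ncard := rfl

lemma pairSet_finite (E : V → V → Prop) (L : List V) : (pairSet E L).Finite :=
  Set.Finite.subset ((Set.finite_Iio L.length).prod (Set.finite_Iio L.length))
    (fun p hp => by
      obtain ⟨-, h1, h2, -⟩ := hp
      exact ⟨h1, h2⟩)

lemma fwd_cons (E : V → V → Prop) (x : V) (M : List V) :
    fwd E (x :: M) = cnt (fun u => E x u) M + fwd E M := by
  have hdec : pairSet E (x :: M) =
      ((fun j => ((0 : ℕ), j + 1)) '' posP (fun u => E x u) M) ∪
      ((fun q : ℕ × ℕ => (q.1 + 1, q.2 + 1)) '' pairSet E M) := by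
    ext ⟨i, j⟩
    simp only [pairSet, Set.mem_setOf_eq, Set.mem_union, Set.mem_image, posP]
    constructor
    · rintro ⟨hij, h1, h2, hE⟩
      cases i with
      | zero =>
        left
        obtain ⟨j', rfl⟩ : ∃ j', j = j' + 1 := ⟨j - 1, by omega⟩
        refine ⟨j', ⟨by simpa using h2, ?_⟩, rfl⟩
        have hg1 : (x :: M).get ⟨0, h1⟩ = x := rfl
        have hg2 : (x :: M).get ⟨j' + 1, h2⟩ = M.get ⟨j', by simpa using h2⟩ :=
          List.get_cons_succ
        rwa [hg1, hg2] at hE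
      | succ i' =>
        right
        obtain ⟨j', rfl⟩ : ∃ j', j = j' + 1 := ⟨j - 1, by omega⟩
        refine ⟨(i', j'), ⟨by omega, by simpa using h1, by simpa using h2, ?_⟩, rfl⟩
        have hg1 : (x :: M).get ⟨i' + 1, h1⟩ = M.get ⟨i', by simpa using h1⟩ :=
          List.get_cons_succ
        have hg2 : (x :: M).get ⟨j' + 1, h2⟩ = M.get ⟨j', by simpa using h2⟩ :=
          List.get_cons_succ
        rwa [hg1, hg2] at hE
    · rintro (⟨k, ⟨hk, hE⟩, heq⟩ | ⟨⟨a, b⟩, ⟨hab, h1, h2, hE⟩, heq⟩)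
      · obtain ⟨rfl, rfl⟩ : i = 0 ∧ j = k + 1 := by
          constructor <;> · injection heq with e1 e2; omega
        refine ⟨by omega, by simp, by simpa using Nat.succ_lt_succ hk, ?_⟩
        have hg2 : (x :: M).get ⟨k + 1, by simpa using Nat.succ_lt_succ hk⟩
            = M.get ⟨k, hk⟩ := List.get_cons_succ
        rw [hg2]
        exact hE
      · obtain ⟨rfl, rfl⟩ : i = a + 1 ∧ j = b + 1 := by
          constructor <;> · injection heq with e1 e2; omega
        refine ⟨by omega, by simpa using Nat.succ_lt_succ h1,
          by simpa using Nat.succ_lt_succ h2, ?_⟩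
        have hg1 : (x :: M).get ⟨a + 1, by simpa using Nat.succ_lt_succ h1⟩
            = M.get ⟨a, h1⟩ := List.get_cons_succ
        have hg2 : (x :: M).get ⟨b + 1, by simpa using Nat.succ_lt_succ h2⟩
            = M.get ⟨b, h2⟩ := List.get_cons_succ
        rw [hg1, hg2]
        exact hE
  have hinj1 : Function.Injective (fun j : ℕ => ((0 : ℕ), j + 1)) := by
    intro a b h; simpa using h
  have hinj2 : Function.Injective (fun q : ℕ × ℕ => (q.1 + 1, q.2 + 1)) := by
    intro ⟨a, b⟩ ⟨c, d⟩ h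
    simp only [Prod.mk.injEq] at h
    simp [Prod.ext_iff]; omega
  have hdisj : Disjoint ((fun j => ((0 : ℕ), j + 1)) '' posP (fun u => E x u) M)
      ((fun q : ℕ × ℕ => (q.1 + 1, q.2 + 1)) '' pairSet E M) := by
    rw [Set.disjoint_left]
    rintro p ⟨k, -, rfl⟩ ⟨⟨a, b⟩, -, heq⟩
    injection heq with e1 e2
    omega
  rw [fwd_eq_ncard_pairSet, hdec,
    Set.ncard_union_eq hdisj (Set.Finite.image _ (posP_finite _ M))
      (Set.Finite.image _ (pairSet_finite E M)),
    Set.ncard_image_of_injective _ hinj1, Set.ncard_image_of_injective _ hinj2,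
    ncard_posP, fwd_eq_ncard_pairSet]

/-- exchange identity: moving `v` to the front across `A`. -/
lemma fwd_exchange (E : V → V → Prop) (v : V) (A B : List V) :
    fwd E (A ++ v :: B) + cnt (fun u => E v u) A
      = fwd E (v :: (A ++ B)) + cnt (fun u => E u v) A := by
  induction A with
  | nil => simp [cnt]
  | cons a A ih =>
    have h1 : fwd E (a :: (A ++ v :: B)) = cnt (fun u => E a u) (A ++ v :: B) + fwd E (A ++ v :: B) :=
      fwd_cons ..
    have h2 : fwd E (v :: (a :: (A ++ B))) = cnt (fun u => E v u) (a :: (A ++ B)) + fwd E (a :: (A ++ B)) :=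
      fwd_cons ..
    have h3 : fwd E (a :: (A ++ B)) = cnt (fun u => E a u) (A ++ B) + fwd E (A ++ B) := fwd_cons ..
    have h4 : fwd E (v :: (A ++ B)) = cnt (fun u => E v u) (A ++ B) + fwd E (A ++ B) := fwd_cons ..
    have e1 : cnt (fun u => E a u) (A ++ v :: B) = cnt (fun u => E a u) A
        + (cnt (fun u => E a u) B + if E a v then 1 else 0) := by
      rw [cnt_append, cnt_cons]
    have e2 : cnt (fun u => E a u) (A ++ B) = cnt (fun u => E a u) A + cnt (fun u => E a u) B :=
      cnt_append ..
    have e3 : cnt (fun u => E v u) (a :: (A ++ B)) = cnt (fun u => E v u) A + cnt (fun u => E v u) B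
        + if E v a then 1 else 0 := by
      rw [cnt_cons, cnt_append]
    have e4 : cnt (fun u => E v u) (A ++ B) = cnt (fun u => E v u) A + cnt (fun u => E v u) B :=
      cnt_append ..
    have e5 : cnt (fun u => E v u) (a :: A) = cnt (fun u => E v u) A + if E v a then 1 else 0 :=
      cnt_cons ..
    have e6 : cnt (fun u => E u v) (a :: A) = cnt (fun u => E u v) A + if E a v then 1 else 0 :=
      cnt_cons ..
    simp only [List.cons_append]
    rw [h1, h2, h3, e1, e2, e3, e5, e6]
    rw [h4, e4] at ih
    omega

def MedOn (E : V → V → Prop) (L : List V) : Prop :=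
  ∀ M : List V, M.Perm L → fwd E M ≤ fwd E L

lemma medOn_tail (E : V → V → Prop) (x : V) (L : List V) (h : MedOn E (x :: L)) :
    MedOn E L := by
  intro M hM
  have h1 := h (x :: M) (hM.cons x)
  rw [fwd_cons, fwd_cons, cnt_perm _ hM] at h1
  omega

lemma medOn_drop (E : V → V → Prop) (t : ℕ) :
    ∀ L : List V, MedOn E L → MedOn E (L.drop t) := by
  induction t with
  | zero => simpa using fun L h => h
  | succ t ih =>
    intro L hL
    cases L with
    | nil => simpa using hL
    | cons x L =>
      rw [List.drop_succ_cons]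
      exact ih L (medOn_tail E x L hL)

/-- the key inequality extracted from medianness: for a median order `A ++ v :: B`,
the number of elements of `A` beaten by `v` is at most the number beating `v`. -/
lemma med_front_ineq (E : V → V → Prop) (v : V) (A B : List V)
    (h : MedOn E (A ++ v :: B)) :
    cnt (fun u => E v u) A ≤ cnt (fun u => E u v) A := by
  have hperm : (v :: (A ++ B)).Perm (A ++ v :: B) := List.perm_middle.symm
  have := h _ hperm
  have hx := fwd_exchange E v A B
  omega

lemma dropWhile_head_false {α : Type*} {p : α → Bool} :
    ∀ {l : List α} {v : α} {B : List α}, l.dropWhile p = v :: B → p v = false := by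
  intro l
  induction l with
  | nil => intro v B h; simp at h
  | cons a l ih =>
    intro v B h
    rw [List.dropWhile_cons] at h
    split at h
    · exact ih h
    · injection h with h1 _
      subst h1
      simpa using ‹¬ p a = true›

theorem rel_main (E : V → V → Prop) (hT : Tournament E) (I : Set V) (hI : IsModule E I)
    (d : V) (hd : d ∈ I) :
    ∀ (n : ℕ) (L₀ : List V), L₀.length = n → (L₀ ++ [d]).Nodup → MedOn E (L₀ ++ [d]) →
    cnt (fun u => u ∉ I ∧ E d u) L₀ ≤
      cnt (fun u => u ∉ I ∧ ¬ E d u ∧ u ≠ d ∧ ∃ w ∈ L₀ ++ [d], E d w ∧ E w u) L₀ := by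
  intro n
  induction n using Nat.strong_induction_on with
  | _ n ih =>
  intro L₀ hlen hnd hmed
  set dp : V → Prop := fun u => u ∉ I ∧ E d u with hdp
  set good : V → Prop := fun u => u ∉ I ∧ ¬ E d u ∧ u ≠ d ∧ ∃ w ∈ L₀ ++ [d], E d w ∧ E w u
    with hgood
  by_cases hcut : ∃ t, 1 ≤ t ∧ t ≤ L₀.length ∧ cnt dp (L₀.take t) ≤ cnt good (L₀.take t)
  · -- cut at t and use induction hypothesis on the suffix
    obtain ⟨t, ht1, ht2, hble⟩ := hcut
    set S := L₀.drop t with hS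
    have hSfull : S ++ [d] = (L₀ ++ [d]).drop t := by
      rw [List.drop_append_of_le_length ht2]
    have hndS : (S ++ [d]).Nodup := by
      rw [hSfull]; exact ((L₀ ++ [d]).drop_sublist t).nodup hnd
    have hmedS : MedOn E (S ++ [d]) := by
      rw [hSfull]; exact medOn_drop E t _ hmed
    have hIH := ih (L₀.length - t) (by omega) S (by simp [hS]) hndS hmedS
    have hmonoW : cnt (fun u => u ∉ I ∧ ¬ E d u ∧ u ≠ d ∧ ∃ w ∈ S ++ [d], E d w ∧ E w u) S
        ≤ cnt good S := by
      refine cnt_mono (fun u _ hu => ?_)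
      obtain ⟨h1, h2, h3, w, hw, hw2⟩ := hu
      refine ⟨h1, h2, h3, w, ?_, hw2⟩
      rcases List.mem_append.mp hw with h | h
      · exact List.mem_append.mpr (Or.inl (List.mem_of_mem_drop h))
      · exact List.mem_append.mpr (Or.inr h)
    have hsplit : L₀.take t ++ S = L₀ := List.take_append_drop t L₀
    have h1 : cnt dp L₀ = cnt dp (L₀.take t) + cnt dp S := by
      conv_lhs => rw [← hsplit]
      exact cnt_append ..
    have h2 : cnt good L₀ = cnt good (L₀.take t) + cnt good S := by
      conv_lhs => rw [← hsplit]
      exact cnt_append ..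
    omega
  · push_neg at hcut
    -- scenario: every nonempty prefix has more dp's than goods
    cases L₀ with
    | nil => simp [cnt]
    | cons x L₁ =>
    obtain ⟨hor, htot⟩ := hT
    have hdnot : d ∉ x :: L₁ := by
      rw [List.nodup_append] at hnd
      intro hmem
      exact hnd.2.2 d hmem d (by simp) rfl
    have hx1 := hcut 1 (le_refl 1) (by simp)
    rw [show (x :: L₁).take 1 = [x] by simp] at hx1
    have hxkey : dp x ∧ ¬ good x := by
      rw [cnt_cons, cnt_cons, cnt_nil, cnt_nil] at hx1
      constructor
      · by_contra h
        rw [if_neg h] at hx1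
        by_cases h2 : good x
        · rw [if_pos h2] at hx1; omega
        · rw [if_neg h2] at hx1; omega
      · intro h
        rw [if_pos h] at hx1
        by_cases h2 : dp x
        · rw [if_pos h2] at hx1; omega
        · rw [if_neg h2] at hx1; omega
    have hxdp : x ∉ I ∧ E d x := hxkey.1
    have hxng : ¬ good x := hxkey.2
    -- the maximal stopper-free prefix
    set A := (x :: L₁).takeWhile
      (fun u => decide (¬ (u ∈ I ∨ (¬ E d u ∧ ¬ ∃ w ∈ (x :: L₁) ++ [d], E d w ∧ E w u)))) with hA
    set R := (x :: L₁).dropWhile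
      (fun u => decide (¬ (u ∈ I ∨ (¬ E d u ∧ ¬ ∃ w ∈ (x :: L₁) ++ [d], E d w ∧ E w u)))) with hR
    have hAR : A ++ R = x :: L₁ := List.takeWhile_append_dropWhile ..
    have hAmem : ∀ u ∈ A,
        ¬ (u ∈ I ∨ (¬ E d u ∧ ¬ ∃ w ∈ (x :: L₁) ++ [d], E d w ∧ E w u)) := by
      intro u hu
      have h2 := List.mem_takeWhile_imp (hA ▸ hu)
      simp only [decide_eq_true_eq] at h2
      exact h2
    -- produce v, B with full list = A ++ v :: B and v ∈ I or v "bad"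
    have hkey : ∃ v B, (x :: L₁) ++ [d] = A ++ v :: B ∧
        (v ∈ I ∨ (¬ E d v ∧ ¬ ∃ w ∈ (x :: L₁) ++ [d], E d w ∧ E w v)) := by
      cases hRc : R with
      | nil =>
        have hAeq : A = x :: L₁ := by rw [← hAR, hRc, List.append_nil]
        exact ⟨d, [], by rw [hAeq], Or.inl hd⟩
      | cons v B₀ =>
        have hvs := dropWhile_head_false (hR ▸ hRc)
        have hvs2 := decide_eq_false_iff_not.mp hvs
        refine ⟨v, B₀ ++ [d], ?_, ?_⟩
        · rw [← hAR, hRc]; simp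
        · exact not_not.mp hvs2
    obtain ⟨v, B, hfull, hv⟩ := hkey
    -- A is nonempty
    have hAne : A ≠ [] := by
      intro hAnil
      rw [hAnil, List.nil_append] at hfull
      rw [List.cons_append] at hfull
      injection hfull with hvx _
      rcases hv with h | h
      · rw [← hvx] at h; exact hxdp.1 h
      · rw [← hvx] at h; exact h.1 hxdp.2
    have hAlen1 : 1 ≤ A.length := by
      have := List.length_pos_iff.mpr hAne
      omega
    have hAlen2 : A.length ≤ (x :: L₁).length := by
      rw [← hAR]; simp
    have htake : (x :: L₁).take A.length = A := by
      have hpre : A <+: (x :: L₁) := ⟨R, hAR⟩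
      exact (List.prefix_iff_eq_take.mp hpre).symm
    -- the median-order inequality
    have hmed2 : MedOn E (A ++ v :: B) := by rwa [hfull] at hmed
    have hineq := med_front_ineq E v A B hmed2
    -- claim 1 : dp u → E v u on A
    have hclaim1 : ∀ u ∈ A, dp u → E v u := by
      intro u huA hu
      obtain ⟨huI, hEdu⟩ := hu
      rcases hv with hvI | ⟨hvnd, hvnw⟩
      · exact ((hI d hd v hvI u huI).1).mp hEdu
      · have huv : ¬ E u v := by
          intro h
          exact hvnw ⟨u, List.mem_append.mpr (Or.inl (hAR ▸ List.mem_append.mpr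
            (Or.inl huA))), hEdu, h⟩
        have hne : u ≠ v := by
          intro h; rw [h] at hEdu; exact hvnd hEdu
        rcases htot u v hne with h | h
        · exact absurd h huv
        · exact h
    -- claim 2 : E u v → good u on A
    have hclaim2 : ∀ u ∈ A, E u v → good u := by
      intro u huA hEuv
      have hnstop := hAmem u huA
      have huI : u ∉ I := fun h => hnstop (Or.inl h)
      have hrest : ¬ E d u → ∃ w ∈ (x :: L₁) ++ [d], E d w ∧ E w u := by
        intro hnd'
        by_contra hno
        exact hnstop (Or.inr ⟨hnd', hno⟩)
      have humem : u ∈ (x :: L₁) ++ [d] :=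
        List.mem_append.mpr (Or.inl (hAR ▸ List.mem_append.mpr (Or.inl huA)))
      have hund : u ≠ d := by
        intro h
        apply hdnot
        rw [← h]
        exact hAR ▸ List.mem_append.mpr (Or.inl huA)
      rcases hv with hvI | ⟨hvnd, hvnw⟩
      · have hEud : E u d := ((hI d hd v hvI u huI).2).mpr hEuv
        have hnEdu : ¬ E d u := hor u d hEud
        obtain ⟨w, hw1, hw2⟩ := hrest hnEdu
        exact ⟨huI, hnEdu, hund, w, hw1, hw2⟩
      · have hnEdu : ¬ E d u := by
          intro h
          exact hvnw ⟨u, humem, h, hEuv⟩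
        obtain ⟨w, hw1, hw2⟩ := hrest hnEdu
        exact ⟨huI, hnEdu, hund, w, hw1, hw2⟩
    -- chain the inequalities
    have hchain : cnt dp A ≤ cnt good A :=
      le_trans (cnt_mono hclaim1) (le_trans hineq (cnt_mono hclaim2))
    have hsc := hcut A.length hAlen1 hAlen2
    rw [htake] at hsc
    omega

lemma cnt_eq_ncard {p : V → Prop} {L : List V} (hnd : L.Nodup) (hall : ∀ v : V, v ∈ L) :
    Set.ncard {u | p u} = cnt p L := by
  classical
  have h1 : {u | p u} = ↑((L.filter (fun u => decide (p u))).toFinset) := by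
    ext u
    simp [List.mem_filter, hall u]
  rw [h1, Set.ncard_coe_finset, List.toFinset_card_of_nodup (hnd.filter _)]
  simp [cnt, List.countP_eq_length_filter]

theorem stmt19 [Fintype V] (E : V → V → Prop) (hT : Tournament E)
    (L : List V) (hL : MedianOrder E L) (hne : L ≠ [])
    (I : Set V) (hI : IsModule E I) (hd : L.getLast hne ∈ I) :
    ∀ v ∈ I, Set.ncard (outN E v \ I) ≤ Set.ncard (secondN E v \ I) := by
  classical
  intro v hv
  obtain ⟨hor, htot⟩ := hT
  set d := L.getLast hne with hdd
  -- reduce to d via the module property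
  have houtN : outN E v \ I = outN E d \ I := by
    ext u
    simp only [Set.mem_diff, outN, Set.mem_setOf_eq]
    exact and_congr_left (fun hu => (hI v hv d hd u hu).1)
  have hsecN : secondN E v \ I = secondN E d \ I := by
    have key : ∀ a ∈ I, ∀ b ∈ I, ∀ u, u ∉ I → u ∈ secondN E a → u ∈ secondN E b := by
      intro a ha b hb u hu ⟨h1, h2, w, hw1, hw2⟩
      have h1' : ¬ E b u := fun h => h1 (((hI a ha b hb u hu).1).mpr h)
      have h2' : u ≠ b := fun h => hu (h ▸ hb)
      have hwI : w ∉ I := by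
        intro hwI
        exact h1 (((hI w hwI a ha u hu).1).mp hw2)
      exact ⟨h1', h2', w, ((hI a ha b hb w hwI).1).mp hw1, hw2⟩
    ext u
    simp only [Set.mem_diff]
    exact ⟨fun ⟨h1, h2⟩ => ⟨key v hv d hd u h2 h1, h2⟩,
      fun ⟨h1, h2⟩ => ⟨key d hd v hv u h2 h1, h2⟩⟩
  rw [houtN, hsecN]
  -- convert to list counts
  obtain ⟨hnd, hall, hmax⟩ := hL
  have hmed : MedOn E L := by
    intro M hM
    exact hmax M (hM.symm.nodup hnd) (fun u => hM.mem_iff.mpr (hall u))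
  set L₀ := L.dropLast with hL₀
  have hdec : L₀ ++ [d] = L := List.dropLast_append_getLast hne
  have hndL : (L₀ ++ [d]).Nodup := by rw [hdec]; exact hnd
  have hmedL : MedOn E (L₀ ++ [d]) := by rw [hdec]; exact hmed
  have hmain := rel_main E ⟨hor, htot⟩ I hI d hd L₀.length L₀ rfl hndL hmedL
  -- identify set cardinalities with counts over L₀
  have e1 : Set.ncard (outN E d \ I) = cnt (fun u => u ∉ I ∧ E d u) L₀ := by
    have : outN E d \ I = {u | u ∉ I ∧ E d u} := by
      ext u; simp [outN, Set.mem_diff, and_comm]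
    rw [this, cnt_eq_ncard hnd hall (p := fun u => u ∉ I ∧ E d u), ← hdec, cnt_append,
      cnt_cons, cnt_nil]
    have hdf : ¬ (d ∉ I ∧ E d d) := fun h => h.1 hd
    rw [if_neg hdf]
    omega
  have e2 : Set.ncard (secondN E d \ I) =
      cnt (fun u => u ∉ I ∧ ¬ E d u ∧ u ≠ d ∧ ∃ w ∈ L₀ ++ [d], E d w ∧ E w u) L₀ := by
    have hset : secondN E d \ I = {u | u ∉ I ∧ ¬ E d u ∧ u ≠ d ∧ ∃ w, E d w ∧ E w u} := by
      ext u
      simp only [secondN, Set.mem_diff, Set.mem_setOf_eq]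
      tauto
    rw [hset, cnt_eq_ncard hnd hall (p := fun u => u ∉ I ∧ ¬ E d u ∧ u ≠ d ∧ ∃ w, E d w ∧ E w u),
      ← hdec, cnt_append, cnt_cons, cnt_nil]
    have hdfalse : ¬ (d ∉ I ∧ ¬ E d d ∧ d ≠ d ∧ ∃ w, E d w ∧ E w d) := fun h => h.1 hd
    rw [if_neg hdfalse]
    have : cnt (fun u => u ∉ I ∧ ¬ E d u ∧ u ≠ d ∧ ∃ w, E d w ∧ E w u) L₀ =
        cnt (fun u => u ∉ I ∧ ¬ E d u ∧ u ≠ d ∧ ∃ w ∈ L₀ ++ [d], E d w ∧ E w u) L₀ := by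
      refine cnt_congr (fun u hu => ?_)
      refine and_congr_right (fun _ => and_congr_right (fun _ => and_congr_right (fun _ => ?_)))
      constructor
      · rintro ⟨w, hw1, hw2⟩
        exact ⟨w, by rw [hdec]; exact hall w, hw1, hw2⟩
      · rintro ⟨w, _, hw1, hw2⟩
        exact ⟨w, hw1, hw2⟩
    omega
  rw [e1, e2]
  exact hmain
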